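/- Let u be an infinite overlap-free binary word and k ≥ 0 an integer. If the word r_k, or its complement, occurs in u at position i (that is, u = x r_k ⋯ or u = x r̄_k ⋯ with |x| = i), then i ≤ 2^k − 1. In particular, the words r_k and its complement have, in total, at most one occurrence in u. -/

import Mathlib

/-- The factor of the infinite word `u` of length `m` starting at position `i`. -/
def factorAt {k : ℕ} (u : ℕ → Fin k) (i m : ℕ) : List (Fin k) :=
  (List.range m).map fun j => u (i + j)

/-- `v` is a factor of the infinite word `u`. -/
def IsFactor {k : ℕ} (v : List (Fin k)) (u : ℕ → Fin k) : Prop :=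
  ∃ i, v = factorAt u i v.length

/-- Subword complexity: the number of distinct factors of length `n`. -/
noncomputable def complexity {k : ℕ} (u : ℕ → Fin k) (n : ℕ) : ℕ :=
  Set.ncard {v : List (Fin k) | v.length = n ∧ IsFactor v u}

/-- The word `w` has period `q` (`1 ≤ q ≤ |w|`, and `w(i) = w(i+q)` whenever defined). -/
def HasPer {A : Type*} (w : List A) (q : ℕ) : Prop :=
  1 ≤ q ∧ q ≤ w.length ∧ ∀ i, i + q < w.length → w[i]? = w[i + q]?

/-- The minimal period of a finite word. -/
noncomputable def minPer {A : Type*} (w : List A) : ℕ := sInf {q | HasPer w q}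

/-- The exponent of a finite word: its length divided by its minimal period. -/
noncomputable def exponent {A : Type*} (w : List A) : ℝ := (w.length : ℝ) / (minPer w : ℝ)

/-- `u` is `α`-power-free: no nonempty factor has exponent `≥ α`. -/
def PowerFree {k : ℕ} (α : ℝ) (u : ℕ → Fin k) : Prop :=
  ∀ v : List (Fin k), v ≠ [] → IsFactor v u → exponent v < α

/-- `u` is `α⁺`-power-free: no nonempty factor has exponent `> α`. -/
def PowerFreePlus {k : ℕ} (α : ℝ) (u : ℕ → Fin k) : Prop :=
  ∀ v : List (Fin k), v ≠ [] → IsFactor v u → exponent v ≤ α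

/-- Overlap-free means `2⁺`-power-free. -/
def OverlapFree {k : ℕ} (u : ℕ → Fin k) : Prop := PowerFreePlus 2 u

/-- The Thue–Morse word: `t n` is the number of 1's, mod 2, in the binary expansion of `n`. -/
def thueMorse : ℕ → Fin 2 := fun n => Fin.ofNat 2 ((Nat.digits 2 n).count 1)

/-- The Thue–Morse morphism μ: 0 → 01, 1 → 10. -/
def mu (w : List (Fin 2)) : List (Fin 2) :=
  w.flatMap fun a => if a = 0 then [0, 1] else [1, 0]

/-- `aK k` is the last letter of `μ^k(0)`. -/
def aK (k : ℕ) : Fin 2 := ((mu^[k]) [0]).getLastD 0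

/-- The word `r_k = a_k μ^k(010) 0`. -/
def rK (k : ℕ) : List (Fin 2) := aK k :: ((mu^[k]) [0, 1, 0] ++ [0])

/-- The complement of a binary word (flip every letter). -/
def compl (w : List (Fin 2)) : List (Fin 2) := w.map fun a => 1 - a

open Fin.NatCast

/-! ### Fin 2 helpers -/

lemma f2_cases (a b : Fin 2) : a = b ∨ a = b + 1 := by revert a b; decide

lemma f2_ne {a b : Fin 2} (h : a ≠ b) : a = b + 1 := by revert a b h; decide

lemma f2_aa (a : Fin 2) : a + 1 + 1 = a := by revert a; decide

lemma f2_sub (a : Fin 2) : 1 - a = a + 1 := by revert a; decide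

/-! ### Thue-Morse recurrences -/

lemma tm_zero : thueMorse 0 = 0 := by simp [thueMorse]

lemma tm_even (n : ℕ) : thueMorse (2 * n) = thueMorse n := by
  rcases Nat.eq_zero_or_pos n with h | h
  · simp [h]
  · unfold thueMorse
    rw [Nat.digits_def' (by norm_num : 1 < 2) (by omega : 0 < 2 * n)]
    simp [Nat.mul_div_cancel_left, Nat.mul_mod_right]

lemma tm_odd (n : ℕ) : thueMorse (2 * n + 1) = thueMorse n + 1 := by
  unfold thueMorse
  rw [Nat.digits_def' (by norm_num : 1 < 2) (by omega : 0 < 2 * n + 1)]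
  have h1 : (2 * n + 1) % 2 = 1 := by omega
  have h2 : (2 * n + 1) / 2 = n := by omega
  rw [h1, h2, List.count_cons]
  simp [Nat.cast_add]

lemma tm_one : thueMorse 1 = 1 := by
  have := tm_odd 0; simpa [tm_zero] using this

lemma tm_pow_sub_one (k : ℕ) : thueMorse (2 ^ k - 1) = (k : Fin 2) := by
  induction k with
  | zero => simpa using tm_zero
  | succ k ih =>
    have h : 2 ^ (k + 1) - 1 = 2 * (2 ^ k - 1) + 1 := by
      have : 1 ≤ 2 ^ k := Nat.one_le_two_pow
      omega
    rw [h, tm_odd, ih]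
    push_cast
    ring

/-! ### mu and its iterates -/

lemma mu_nil : mu [] = [] := rfl

lemma mu_cons (a : Fin 2) (l : List (Fin 2)) : mu (a :: l) = a :: (a + 1) :: mu l := by
  fin_cases a <;> rfl

lemma mu_length (l : List (Fin 2)) : (mu l).length = 2 * l.length := by
  induction l with
  | nil => rfl
  | cons a l ih => rw [mu_cons]; simp [ih]; omega

lemma mu_getD_even (l : List (Fin 2)) (n : ℕ) (h : n < l.length) :
    (mu l).getD (2 * n) 0 = l.getD n 0 := by
  induction l generalizing n with
  | nil => simp at h
  | cons a l ih =>
    rw [mu_cons]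
    rcases n with _ | n
    · rfl
    · have h2 : 2 * (n + 1) = (2 * n) + 1 + 1 := by ring
      rw [h2]
      simp only [List.getD_cons_succ]
      exact ih n (by simpa using h)

lemma mu_getD_odd (l : List (Fin 2)) (n : ℕ) (h : n < l.length) :
    (mu l).getD (2 * n + 1) 0 = l.getD n 0 + 1 := by
  induction l generalizing n with
  | nil => simp at h
  | cons a l ih =>
    rw [mu_cons]
    rcases n with _ | n
    · rfl
    · have h2 : 2 * (n + 1) + 1 = (2 * n + 1) + 1 + 1 := by ring
      rw [h2]
      simp only [List.getD_cons_succ]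
      exact ih n (by simpa using h)

lemma muk_length (k : ℕ) (l : List (Fin 2)) : ((mu^[k]) l).length = l.length * 2 ^ k := by
  induction k generalizing l with
  | zero => simp
  | succ k ih =>
    rw [Function.iterate_succ_apply, ih, mu_length]
    ring

lemma muk_getD (k : ℕ) (l : List (Fin 2)) (s : ℕ) (h : s < l.length * 2 ^ k) :
    ((mu^[k]) l).getD s 0 = l.getD (s / 2 ^ k) 0 + thueMorse (s % 2 ^ k) := by
  induction k generalizing s with
  | zero => simp [Nat.mod_one, tm_zero]
  | succ k ih =>
    rw [Function.iterate_succ_apply']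
    have hp : (2:ℕ) ^ (k + 1) = 2 * 2 ^ k := by ring
    have hL : l.length * 2 ^ (k + 1) = 2 * (l.length * 2 ^ k) := by rw [hp]; ring
    rw [hL] at h
    rcases Nat.even_or_odd s with ⟨n, hn⟩ | ⟨n, hn⟩
    · have hs : s = 2 * n := by omega
      subst hs
      have hn' : n < l.length * 2 ^ k := by omega
      have hn2 : n < ((mu^[k]) l).length := by rw [muk_length]; exact hn'
      rw [mu_getD_even _ _ hn2, ih _ hn']
      have e1 : 2 * n / 2 ^ (k + 1) = n / 2 ^ k := by
        rw [hp, ← Nat.div_div_eq_div_mul]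
        congr 1; omega
      have e2 : 2 * n % 2 ^ (k + 1) = 2 * (n % 2 ^ k) := by rw [hp, Nat.mul_mod_mul_left]
      rw [e1, e2, tm_even]
    · have hs : s = 2 * n + 1 := by omega
      subst hs
      have hn' : n < l.length * 2 ^ k := by omega
      have hn2 : n < ((mu^[k]) l).length := by rw [muk_length]; exact hn'
      rw [mu_getD_odd _ _ hn2, ih _ hn']
      have e1 : (2 * n + 1) / 2 ^ (k + 1) = n / 2 ^ k := by
        rw [hp, ← Nat.div_div_eq_div_mul]
        congr 1; omega
      have e2 : (2 * n + 1) % 2 ^ (k + 1) = 2 * (n % 2 ^ k) + 1 := by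
        have hd := Nat.div_add_mod n (2 ^ k)
        have hr : n % 2 ^ k < 2 ^ k := Nat.mod_lt _ (by positivity)
        have hrep : 2 * n + 1 = (2 * (n % 2 ^ k) + 1) + 2 ^ (k + 1) * (n / 2 ^ k) := by
          rw [hp, mul_assoc]; omega
        rw [hrep, Nat.add_mul_mod_self_left, Nat.mod_eq_of_lt (by omega)]
      rw [e1, e2, tm_odd, add_assoc]

/-! ### The letter pattern of `rK` -/

/-- letter `x` of `μ^k(010)`. -/
def M (k x : ℕ) : Fin 2 := ((x / 2 ^ k : ℕ) : Fin 2) + thueMorse (x % 2 ^ k)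

/-- letter `t` of `r_k`. -/
def P (k t : ℕ) : Fin 2 :=
  if t = 0 then (k : Fin 2) else if t = 3 * 2 ^ k + 1 then 0 else M k (t - 1)

/-- Occurrence of `r_k + g` at position `i` of `u`. -/
def OccF (u : ℕ → Fin 2) (i k : ℕ) (g : Fin 2) : Prop :=
  ∀ t < 3 * 2 ^ k + 2, u (i + t) = P k t + g

lemma P_zero (k : ℕ) : P k 0 = (k : Fin 2) := rfl

lemma P_last (k : ℕ) : P k (3 * 2 ^ k + 1) = 0 := by
  have h : (1:ℕ) ≤ 2 ^ k := Nat.one_le_two_pow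
  unfold P
  rw [if_neg (by omega), if_pos rfl]

lemma P_mid (k x : ℕ) (hx : x < 3 * 2 ^ k) : P (k) (1 + x) = M k x := by
  have h : (1:ℕ) ≤ 2 ^ k := Nat.one_le_two_pow
  unfold P
  rw [if_neg (by omega), if_neg (by omega)]
  congr 1
  omega

lemma getLastD_getD (l : List (Fin 2)) (d : Fin 2) (h : l ≠ []) :
    l.getLastD d = l.getD (l.length - 1) d := by
  induction l generalizing d with
  | nil => tauto
  | cons a l ih =>
    rw [List.getLastD_cons]
    rcases eq_or_ne l [] with rfl | hl
    · rfl
    · have hpos : 0 < l.length := List.length_pos_iff.mpr hl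
      have e : (a :: l).length - 1 = (l.length - 1) + 1 := by simp; omega
      rw [ih a hl, e, List.getD_cons_succ, List.getD_eq_getElem l a (by omega),
        List.getD_eq_getElem l d (by omega)]

lemma aK_val (k : ℕ) : aK k = (k : Fin 2) := by
  have h1 : (1:ℕ) ≤ 2 ^ k := Nat.one_le_two_pow
  have hlen : ((mu^[k]) [0] : List (Fin 2)).length = 2 ^ k := by
    rw [muk_length]; simp
  have hne : ((mu^[k]) [0] : List (Fin 2)) ≠ [] := by
    intro hcon
    rw [hcon] at hlen
    simp at hlen
    omega
  rw [aK, getLastD_getD _ _ hne, hlen, muk_getD k [0] (2 ^ k - 1) (by simp)]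
  have e1 : (2 ^ k - 1) / 2 ^ k = 0 := Nat.div_eq_of_lt (by omega)
  have e2 : (2 ^ k - 1) % 2 ^ k = 2 ^ k - 1 := Nat.mod_eq_of_lt (by omega)
  rw [e1, e2, tm_pow_sub_one]
  simp

lemma rK_length (k : ℕ) : (rK k).length = 3 * 2 ^ k + 2 := by
  unfold rK
  simp [muk_length]

lemma rK_getD (k : ℕ) (t : ℕ) (ht : t < 3 * 2 ^ k + 2) : (rK k).getD t 0 = P k t := by
  have hpow : (0:ℕ) < 2 ^ k := (by positivity)
  unfold rK
  have hmlen : ((mu^[k]) [0,1,0] : List (Fin 2)).length = 3 * 2 ^ k := by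
    rw [muk_length]; simp
  rcases t with _ | s
  · rw [List.getD_cons_zero, P_zero, aK_val]
  · rw [List.getD_cons_succ]
    by_cases hs : s < 3 * 2 ^ k
    · have hsl : s < ((mu^[k]) [0,1,0] : List (Fin 2)).length := by omega
      rw [List.getD_eq_getElem?_getD, List.getElem?_append_left hsl,
        ← List.getD_eq_getElem?_getD]
      have e0 : s + 1 = 1 + s := by omega
      rw [e0, P_mid k s hs]
      rw [muk_getD k [0,1,0] s (by simp only [List.length_cons, List.length_nil]; omega)]
      unfold M
      congr 1
      have hq : s / 2 ^ k < 3 := by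
        by_contra hcon
        push_neg at hcon
        have h3 : 3 * 2 ^ k ≤ s := (Nat.le_div_iff_mul_le hpow).mp hcon
        omega
      obtain ⟨q, hq2⟩ : ∃ q, s / 2 ^ k = q := ⟨_, rfl⟩
      rw [hq2] at hq ⊢
      rcases (show q = 0 ∨ q = 1 ∨ q = 2 by omega) with h | h | h <;> rw [h] <;> decide
    · have hs3 : s = 3 * 2 ^ k := by omega
      subst hs3
      have e0 : (3 * 2 ^ k : ℕ) + 1 = 3 * 2 ^ k + 1 := rfl
      rw [e0, P_last, List.getD_eq_getElem?_getD,
        List.getElem?_append_right (by omega), hmlen]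
      simp

/-! ### factorAt lemmas and the combinatorial form of overlap-freeness -/

lemma factorAt_length {κ : ℕ} (u : ℕ → Fin κ) (i m : ℕ) : (factorAt u i m).length = m := by
  simp [factorAt]

lemma factorAt_get? (u : ℕ → Fin 2) (i m t : ℕ) (ht : t < m) :
    (factorAt u i m)[t]? = some (u (i + t)) := by
  unfold factorAt
  rw [List.getElem?_map, List.getElem?_range ht]
  rfl

lemma factorAt_getD (u : ℕ → Fin 2) (i m t : ℕ) (ht : t < m) :
    (factorAt u i m).getD t 0 = u (i + t) := by
  rw [List.getD_eq_getElem _ _ (by rw [factorAt_length]; exact ht)]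
  unfold factorAt
  simp

lemma factorAt_eq_iff (u : ℕ → Fin 2) (i m : ℕ) (l : List (Fin 2)) (hl : l.length = m) :
    factorAt u i m = l ↔ ∀ t < m, u (i + t) = l.getD t 0 := by
  constructor
  · intro h t ht
    rw [← h, factorAt_getD u i m t ht]
  · intro h
    apply List.ext_getElem (by rw [factorAt_length, hl])
    intro t h1 h2
    rw [factorAt_length] at h1
    have := h t h1
    rw [← List.getD_eq_getElem l 0 h2, ← this, ← factorAt_getD u i m t h1,
      List.getD_eq_getElem _ _ (by rw [factorAt_length]; exact h1)]

/-- The combinatorial content of overlap-freeness: no factor of length `> 2q` with period `q`. -/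
def Olf (u : ℕ → Fin 2) : Prop :=
  ∀ b q m, 0 < q → (∀ t, t + q < m → u (b + t) = u (b + t + q)) → m ≤ 2 * q

lemma olf_of_overlapFree {u : ℕ → Fin 2} (hu : OverlapFree u) : Olf u := by
  intro b q m hq hper
  by_contra hcon
  push_neg at hcon
  set v : List (Fin 2) := factorAt u b m with hv
  have hvl : v.length = m := factorAt_length u b m
  have hne : v ≠ [] := by
    have : 0 < v.length := by omega
    exact List.ne_nil_of_length_pos this
  have hfac : IsFactor v u := ⟨b, by rw [hvl]⟩
  have hhp : HasPer v q := by
    refine ⟨hq, by omega, ?_⟩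
    intro t ht
    rw [hvl] at ht
    rw [hv, factorAt_get? u b m t (by omega), factorAt_get? u b m (t + q) (by omega)]
    exact congrArg some (by rw [← add_assoc]; exact hper t ht)
  have hnonempty : {p | HasPer v p}.Nonempty := ⟨q, hhp⟩
  have hmem : HasPer v (minPer v) := Nat.sInf_mem hnonempty
  have hle : minPer v ≤ q := Nat.sInf_le hhp
  have hpos : 0 < minPer v := hmem.1
  have hexp : exponent v ≤ 2 := hu v hne hfac
  unfold exponent at hexp
  rw [hvl] at hexp
  have hposR : (0:ℝ) < (minPer v : ℝ) := by exact_mod_cast hpos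
  rw [div_le_iff₀ hposR] at hexp
  have : (m : ℝ) ≤ (2 * minPer v : ℕ) := by push_cast; linarith
  have hm2 : m ≤ 2 * minPer v := by exact_mod_cast this
  omega

/-! ### Occurrence bridges -/

lemma compl_getD (l : List (Fin 2)) (t : ℕ) (ht : t < l.length) :
    (_root_.compl l).getD t 0 = l.getD t 0 + 1 := by
  unfold _root_.compl
  rw [List.getD_eq_getElem _ _ (by simpa using ht), List.getD_eq_getElem _ _ ht]
  simp [f2_sub]

lemma occ_iff_r (u : ℕ → Fin 2) (i k : ℕ) :
    factorAt u i (rK k).length = rK k ↔ OccF u i k 0 := by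
  rw [factorAt_eq_iff u i _ _ rfl, rK_length]
  unfold OccF
  constructor
  · intro h t ht
    rw [h t ht, rK_getD k t ht, add_zero]
  · intro h t ht
    rw [h t ht, rK_getD k t ht, add_zero]

lemma occ_iff_c (u : ℕ → Fin 2) (i k : ℕ) :
    factorAt u i (rK k).length = _root_.compl (rK k) ↔ OccF u i k 1 := by
  have hcl : (_root_.compl (rK k)).length = 3 * 2 ^ k + 2 := by
    unfold _root_.compl
    rw [List.length_map, rK_length]
  rw [show (rK k).length = 3 * 2 ^ k + 2 from rK_length k, factorAt_eq_iff u i _ _ hcl]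
  unfold OccF
  constructor
  · intro h t ht
    rw [h t ht, compl_getD _ _ (by rw [rK_length]; exact ht), rK_getD k t ht]
  · intro h t ht
    rw [h t ht, compl_getD _ _ (by rw [rK_length]; exact ht), rK_getD k t ht]

/-! ### Pair parity combinatorics in overlap-free words -/

lemma olf_aaa {u : ℕ → Fin 2} (hu : Olf u) {a : ℕ}
    (h1 : u (a + 1) = u a) (h2 : u (a + 2) = u (a + 1)) : False := by
  have h := hu a 1 3 (by norm_num) ?_
  · omega
  · intro t ht
    have ht' : t < 2 := by omega
    interval_cases t
    · exact h1.symm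
    · exact h2.symm

lemma olf_D {u : ℕ → Fin 2} (hu : Olf u) {m : ℕ}
    (h0 : u (m + 1) = u m) (h3 : u (m + 4) = u (m + 3)) :
    m = 0 ∧ u (m + 2) = u m + 1 ∧ u (m + 3) = u m := by
  have l2 : u (m + 2) = u m + 1 := by
    rcases f2_cases (u (m + 2)) (u (m + 1)) with h | h
    · exact (olf_aaa hu h0 h).elim
    · rw [h, h0]
  have l3 : u (m + 3) = u m := by
    rcases f2_cases (u (m + 3)) (u (m + 2)) with h | h
    · exact (olf_aaa hu h h3).elim
    · rw [h, l2, f2_aa]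
  refine ⟨?_, l2, l3⟩
  by_contra hm
  obtain ⟨n, rfl⟩ : ∃ n, m = n + 1 := ⟨m - 1, by omega⟩
  set x := u (n + 1) with hx
  have a1 : u (n + 2) = x := h0
  have a2 : u (n + 3) = x + 1 := l2
  have a3 : u (n + 4) = x := l3
  have a4 : u (n + 5) = x := by
    have : u (n + 5) = u (n + 4) := h3
    rw [this, a3]
  have a0 : u n = x + 1 := by
    rcases f2_cases (u n) x with h | h
    · refine (olf_aaa hu (a := n) ?_ ?_).elim
      · rw [h, hx]
      · exact a1
    · exact h
  have a5 : u (n + 6) = x + 1 := by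
    rcases f2_cases (u (n + 6)) x with h | h
    · refine (olf_aaa hu (a := n + 4) ?_ ?_).elim
      · rw [a4, a3]
      · rw [h, a4]
    · exact h
  have h7 := hu n 3 7 (by norm_num) ?_
  · omega
  · intro t ht
    have ht' : t < 4 := by omega
    interval_cases t
    · rw [show n + 0 = n from rfl, a0, show n + 0 + 3 = n + 3 by omega, a2]
    · rw [show n + 1 + 3 = n + 4 by omega, a3, hx]
    · rw [show n + 2 + 3 = n + 5 by omega, a4, a1]
    · rw [show n + 3 + 3 = n + 6 by omega, a5, a2]

/-- Two pairs at odd distance force the "defect at 0" pattern. -/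
lemma olf_PP {u : ℕ → Fin 2} (hu : Olf u) :
    ∀ d m n, n = m + d → d % 2 = 1 → u (m + 1) = u m → u (n + 1) = u n →
      m = 0 ∧ u 4 = u 3 := by
  intro d
  induction d using Nat.strong_induction_on with
  | _ d IH =>
    intro m n hn hd hpm hpn
    by_cases hex : ∃ p, m < p ∧ p < n ∧ u (p + 1) = u p
    · obtain ⟨p, hp1, hp2, hpp⟩ := hex
      rcases Nat.even_or_odd (p - m) with he | ho
      · -- then n - p is odd; conclusion p = 0 is absurd
        have h2 := IH (n - p) (by omega) p n (by omega)
          (by rcases he with ⟨r, hr⟩; omega) hpp hpn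
        omega
      · exact IH (p - m) (by omega) m p (by omega)
          (by rcases ho with ⟨r, hr⟩; omega) hpm hpp
    · push_neg at hex
      have hne : ∀ p, m < p → p < n → u (p + 1) = u p + 1 :=
        fun p h1 h2 => f2_ne (hex p h1 h2)
      rcases (show d = 1 ∨ d = 3 ∨ 5 ≤ d by omega) with rfl | rfl | h5
      · subst hn
        exact (olf_aaa hu hpm hpn).elim
      · subst hn
        have hD := olf_D hu hpm hpn
        refine ⟨hD.1, ?_⟩
        have hm0 := hD.1
        subst hm0
        exact hpn
      · have h4 := hu (m + 1) 2 5 (by norm_num) ?_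
        · omega
        · intro t ht
          have e1 : u (m + 1 + t + 1) = u (m + 1 + t) + 1 :=
            hne (m + 1 + t) (by omega) (by omega)
          have e2 : u (m + 1 + t + 2) = u (m + 1 + t + 1) + 1 := by
            have := hne (m + 1 + t + 1) (by omega) (by omega)
            exact this
          rw [e2, e1, f2_aa]

/-! ### Occurrence accessors and M values -/

lemma occ_head {u : ℕ → Fin 2} {i k : ℕ} {g : Fin 2} (h : OccF u i k g) :
    u i = (k : Fin 2) + g := by
  have := h 0 (by omega)
  rwa [P_zero] at this

lemma occ_mid {u : ℕ → Fin 2} {i k : ℕ} {g : Fin 2} (h : OccF u i k g)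
    (x : ℕ) (hx : x < 3 * 2 ^ k) : u (i + 1 + x) = M k x + g := by
  have h2 := h (1 + x) (by omega)
  rw [P_mid k x hx] at h2
  rwa [show i + (1 + x) = i + 1 + x by omega] at h2

lemma occ_tail {u : ℕ → Fin 2} {i k : ℕ} {g : Fin 2} (h : OccF u i k g) :
    u (i + 1 + 3 * 2 ^ k) = g := by
  have h2 := h (3 * 2 ^ k + 1) (by omega)
  rw [P_last, zero_add] at h2
  rwa [show i + (3 * 2 ^ k + 1) = i + 1 + 3 * 2 ^ k by omega] at h2

lemma M_zero (x : ℕ) : M 0 x = (x : Fin 2) := by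
  simp [M, Nat.mod_one, tm_zero]

lemma M_val1 (k : ℕ) : M (k + 1) 1 = 1 := by
  have h : (1:ℕ) < 2 ^ (k + 1) := by
    have : (2:ℕ) ^ 1 ≤ 2 ^ (k + 1) := Nat.pow_le_pow_right (by norm_num) (by omega)
    omega
  unfold M
  rw [Nat.div_eq_of_lt h, Nat.mod_eq_of_lt h, tm_one]
  simp

lemma tm_two : thueMorse 2 = 1 := (tm_even 1).trans tm_one

lemma M_val2 (k : ℕ) : M (k + 1) 2 = 1 := by
  rcases k with _ | k
  · unfold M
    norm_num [tm_zero]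
  · have h : (2:ℕ) < 2 ^ (k + 2) := by
      have : (2:ℕ) ^ 2 ≤ 2 ^ (k + 2) := Nat.pow_le_pow_right (by norm_num) (by omega)
      omega
    unfold M
    rw [Nat.div_eq_of_lt h, Nat.mod_eq_of_lt h, tm_two]
    simp

lemma M_even (k x : ℕ) : M (k + 1) (2 * x) = M k x := by
  unfold M
  have hp : (2:ℕ) ^ (k + 1) = 2 * 2 ^ k := by ring
  have e1 : 2 * x / 2 ^ (k + 1) = x / 2 ^ k := by
    rw [hp, ← Nat.div_div_eq_div_mul]
    congr 1
    omega
  have e2 : 2 * x % 2 ^ (k + 1) = 2 * (x % 2 ^ k) := by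
    rw [hp, Nat.mul_mod_mul_left]
  rw [e1, e2, tm_even]

/-! ### Desubstitution helpers -/

lemma f2_succ_ne (a : Fin 2) : a + 1 ≠ a := by revert a; decide

lemma olf_sub {u : ℕ → Fin 2} (hu : Olf u) (c : ℕ)
    (hBL : ∀ t, u (c + 2 * t + 1) = u (c + 2 * t) + 1) :
    Olf (fun t => u (c + 2 * t)) := by
  intro b q m hq hper
  have key := hu (c + 2 * b) (2 * q) (2 * m) (by omega) ?_
  · omega
  · intro t ht
    rcases Nat.even_or_odd t with ⟨s, hs⟩ | ⟨s, hs⟩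
    · have hs' : t = 2 * s := by omega
      subst hs'
      have h1 := hper s (by omega)
      simp only at h1
      calc u (c + 2 * b + 2 * s) = u (c + 2 * (b + s)) := congrArg u (by ring)
        _ = u (c + 2 * (b + s + q)) := h1
        _ = u (c + 2 * b + 2 * s + 2 * q) := congrArg u (by ring)
    · subst hs
      have h1 := hper s (by omega)
      simp only at h1
      calc u (c + 2 * b + (2 * s + 1)) = u (c + 2 * (b + s) + 1) := congrArg u (by ring)
        _ = u (c + 2 * (b + s)) + 1 := hBL (b + s)
        _ = u (c + 2 * (b + s + q)) + 1 := by rw [h1]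
        _ = u (c + 2 * (b + s + q) + 1) := (hBL (b + s + q)).symm
        _ = u (c + 2 * b + (2 * s + 1) + 2 * q) := congrArg u (by ring)

lemma occ_sub {u : ℕ → Fin 2} {i k c j : ℕ} {g : Fin 2}
    (hocc : OccF u i (k + 1) g) (hj : i + 1 = c + 2 * (j + 1))
    (hBL : ∀ t, u (c + 2 * t + 1) = u (c + 2 * t) + 1) :
    OccF (fun t => u (c + 2 * t)) j k g := by
  have hpow : (0:ℕ) < 2 ^ k := (by positivity)
  intro t ht
  rcases (show t = 0 ∨ t = 3 * 2 ^ k + 1 ∨ (1 ≤ t ∧ t ≤ 3 * 2 ^ k) by omega)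
    with rfl | rfl | ⟨h1, h2⟩
  · -- head
    have hb := hBL j
    have hi : u i = ((k : Fin 2) + 1) + g := by
      have := occ_head hocc
      rwa [Nat.cast_add, Nat.cast_one] at this
    have hiu : u (c + 2 * j + 1) = ((k : Fin 2) + 1) + g := by
      rw [show c + 2 * j + 1 = i from by omega]
      exact hi
    rw [hiu] at hb
    rcases f2_cases (u (c + 2 * j)) ((k : Fin 2) + g) with h | h
    · simp only [P_zero]
      show u (c + 2 * j) = (k : Fin 2) + g
      exact h
    · exfalso
      rw [h] at hb
      have hb2 : (k : Fin 2) + 1 + g = (k : Fin 2) + g := by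
        rw [hb, add_right_comm, f2_aa]
      have hb3 : (k : Fin 2) + 1 = (k : Fin 2) :=
        add_right_cancel hb2
      exact f2_succ_ne _ hb3
  · -- tail
    have htl := occ_tail hocc
    rw [P_last, zero_add]
    calc u (c + 2 * (j + (3 * 2 ^ k + 1)))
        = u (i + 1 + 3 * 2 ^ (k + 1)) := congrArg u (by rw [pow_succ]; omega)
      _ = g := htl
  · -- middle
    obtain ⟨x, rfl⟩ : ∃ x, t = 1 + x := ⟨t - 1, by omega⟩
    rw [P_mid k x (by omega)]
    have hmid := occ_mid hocc (2 * x) (by rw [pow_succ]; omega)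
    rw [M_even] at hmid
    calc u (c + 2 * (j + (1 + x)))
        = u (i + 1 + 2 * x) := congrArg u (by omega)
      _ = M k x + g := hmid

/-! ### Block structure of an overlap-free word around an occurrence -/

lemma olf_struct {u : ℕ → Fin 2} (hu : Olf u) {i k : ℕ} {g : Fin 2}
    (hocc : OccF u i (k + 1) g) :
    ∃ c, c ≤ 2 ∧ (i + 1) % 2 = c % 2 ∧ (∀ t, u (c + 2 * t + 1) = u (c + 2 * t) + 1) ∧
      (c = 2 → u 1 = u 0 ∧ u 1 = u 2 + 1 ∧ u 4 = u 2 + 1) := by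
  have hpow : (0:ℕ) < 2 ^ (k + 1) := (by positivity)
  have p2 : u (i + 2) = 1 + g := by
    have h := occ_mid hocc 1 (by omega)
    rw [M_val1] at h
    exact (congrArg u (show i + 2 = i + 1 + 1 by omega)).trans h
  have p3 : u (i + 3) = 1 + g := by
    have h := occ_mid hocc 2 (by omega)
    rw [M_val2] at h
    exact (congrArg u (show i + 3 = i + 1 + 2 by omega)).trans h
  have hpair : u (i + 2 + 1) = u (i + 2) := by
    rw [p2, show i + 2 + 1 = i + 3 by omega, p3]
  by_cases hH : ∀ n, u (n + 1) = u n → n % 2 = i % 2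
  · refine ⟨(i + 1) % 2, by omega, by omega, ?_, by intro h; omega⟩
    intro t
    rcases f2_cases (u ((i + 1) % 2 + 2 * t + 1)) (u ((i + 1) % 2 + 2 * t)) with h | h
    · exact absurd (hH _ h) (by omega)
    · exact h
  · push_neg at hH
    obtain ⟨n, hpn, hnpar⟩ := hH
    have hkey : n = 0 ∧ u 4 = u 3 := by
      rcases lt_trichotomy n (i + 2) with hlt | heq | hgt
      · exact olf_PP hu (i + 2 - n) n (i + 2) (by omega) (by omega) hpn hpair
      · omega
      · have h2 := olf_PP hu (n - (i + 2)) (i + 2) n (by omega) (by omega) hpair hpn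
        omega
    obtain ⟨hn0, h43⟩ := hkey
    subst hn0
    have h10 : u 1 = u 0 := hpn
    have hiodd : i % 2 = 1 := by omega
    have h2 : u 2 = u 0 + 1 := by
      rcases f2_cases (u 2) (u 1) with h | h
      · exact (olf_aaa hu (a := 0) h10 h).elim
      · rw [h, h10]
    have h32 : u 3 = u 2 + 1 := by
      rcases f2_cases (u 3) (u 2) with h | h
      · exact (olf_aaa hu (a := 2) h h43).elim
      · exact h
    refine ⟨2, by omega, by omega, ?_, ?_⟩
    · intro t
      rcases f2_cases (u (2 + 2 * t + 1)) (u (2 + 2 * t)) with h | h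
      · exfalso
        rcases Nat.eq_zero_or_pos t with rfl | ht
        · exact olf_aaa hu (a := 2) h h43
        · have hP := olf_PP hu (2 + 2 * t - 3) 3 (2 + 2 * t) (by omega) (by omega) h43 h
          omega
      · exact h
    · intro _
      refine ⟨h10, ?_, ?_⟩
      · rw [h10, h2, f2_aa]
      · rw [h43, h32]

/-- Squares of length 1 and 3 at the start of a word with the defect pattern. -/
lemma defect_squares {u : ℕ → Fin 2} (hd1 : u 1 = u 0) (hd2 : u 1 = u 2 + 1)
    (hd3 : u 4 = u 2 + 1) (h32 : u 3 = u 2 + 1) (h54 : u 5 = u 4 + 1)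
    (N : ℕ) (hN : 3 ≤ N) (b : Fin 2) :
    ∃ L, 1 ≤ L ∧ L ≤ N ∧ (∀ s < L, u s = u (s + L)) ∧ u (L - 1) = b := by
  have h20 : u 2 = u 0 + 1 := by
    have : u 2 + 1 + 1 = u 0 + 1 := by rw [← hd2, hd1]
    rw [f2_aa] at this
    exact this
  rcases f2_cases b (u 0) with rfl | hb
  · exact ⟨1, by omega, by omega, by
      intro s hs
      have hs0 : s = 0 := by omega
      subst hs0
      exact hd1.symm, rfl⟩
  · refine ⟨3, by omega, by omega, ?_, ?_⟩
    · intro s hs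
      have hs3 : s = 0 ∨ s = 1 ∨ s = 2 := by omega
      rcases hs3 with rfl | rfl | rfl
      · rw [show (0:ℕ) + 3 = 3 from rfl, h32, ← hd2, hd1]
      · rw [show (1:ℕ) + 3 = 4 from rfl, hd3, hd2]
      · rw [show (2:ℕ) + 3 = 5 from rfl, h54, hd3, f2_aa]
    · rw [hb, show (3:ℕ) - 1 = 2 from rfl, h20]

/-! ### The main theorem: occurrences of `r_k` are at position `≤ 2^k - 1`,
and at the maximal position the word starts with squares of both last letters. -/

theorem occF_main (k : ℕ) : ∀ (u : ℕ → Fin 2), Olf u → ∀ (g : Fin 2) (i : ℕ), OccF u i k g →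
    i ≤ 2 ^ k - 1 ∧ (i = 2 ^ k - 1 →
      ∀ b : Fin 2, ∃ L, 1 ≤ L ∧ L ≤ 3 * 2 ^ k ∧ (∀ s < L, u s = u (s + L)) ∧ u (L - 1) = b) := by
  induction k with
  | zero =>
    intro u hu g i hocc
    have e0 : u i = g := by
      have := occ_head hocc
      rwa [Nat.cast_zero, zero_add] at this
    have e1 : u (i + 1) = g := by
      have := occ_mid hocc 0 (by norm_num)
      rwa [M_zero, Nat.cast_zero, zero_add] at this
    have e2 : u (i + 2) = 1 + g := by
      have := occ_mid hocc 1 (by norm_num)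
      rw [M_zero, Nat.cast_one] at this
      exact (congrArg u (show i + 2 = i + 1 + 1 by omega)).trans this
    have e3 : u (i + 3) = g := by
      have := occ_mid hocc 2 (by norm_num)
      rw [M_zero, show ((2:ℕ) : Fin 2) = 0 by decide, zero_add] at this
      exact (congrArg u (show i + 3 = i + 1 + 2 by omega)).trans this
    have e4 : u (i + 4) = g := by
      have := occ_tail hocc
      exact (congrArg u (show i + 4 = i + 1 + 3 * 2 ^ 0 by norm_num)).trans this
    have hD := olf_D hu (m := i) (by rw [e1, e0]) (by rw [e4, e3])
    have hi0 : i = 0 := hD.1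
    subst hi0
    refine ⟨by norm_num, ?_⟩
    intro _ b
    have e5 : u 5 = g + 1 := by
      rcases f2_cases (u 5) (u 4) with h | h
      · exact (olf_aaa hu (a := 3) (by
          show u 4 = u 3
          rw [show (4:ℕ) = 0 + 4 from rfl, e4, show (3:ℕ) = 0 + 3 from rfl, e3])
          (by
            show u 5 = u 4
            exact h)).elim
      · rw [h, show (4:ℕ) = 0 + 4 from rfl, e4]
    rcases f2_cases b (u 0) with rfl | hb
    · refine ⟨1, by omega, by norm_num, ?_, rfl⟩
      intro s hs
      have hs0 : s = 0 := by omega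
      subst hs0
      show u 0 = u 1
      rw [show (1:ℕ) = 0 + 1 from rfl, e1, show u 0 = u (0 + 0) from rfl, e0]
    · refine ⟨3, by omega, by norm_num, ?_, ?_⟩
      · intro s hs
        have hs3 : s = 0 ∨ s = 1 ∨ s = 2 := by omega
        rcases hs3 with rfl | rfl | rfl
        · show u 0 = u 3
          rw [show (3:ℕ) = 0 + 3 from rfl, e3, show u 0 = u (0 + 0) from rfl, e0]
        · show u 1 = u 4
          rw [show (4:ℕ) = 0 + 4 from rfl, e4, show (1:ℕ) = 0 + 1 from rfl, e1]
        · show u 2 = u 5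
          calc u 2 = u (0 + 2) := congrArg u (by omega)
            _ = 1 + g := e2
            _ = g + 1 := add_comm 1 g
            _ = u 5 := e5.symm
      · show u 2 = b
        rw [hb]
        calc u 2 = u (0 + 2) := congrArg u (by omega)
          _ = 1 + g := e2
          _ = u 0 + 1 := by rw [e0, add_comm]
  | succ k IH =>
    intro u hu g i hocc
    have h2k : (1:ℕ) ≤ 2 ^ k := Nat.one_le_two_pow
    have hps : (2:ℕ) ^ (k + 1) = 2 * 2 ^ k := by ring
    obtain ⟨c, hc2, hcp, hBL, hdef⟩ := olf_struct hu hocc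
    obtain ⟨j, hj⟩ : ∃ j, i + 1 = c + 2 * j := ⟨(i + 1 - c) / 2, by omega⟩
    rcases Nat.eq_zero_or_pos j with rfl | hjpos
    · -- j = 0 : i = c - 1 ≤ 1
      constructor
      · omega
      · intro hieq b
        have hk0 : k = 0 := by
          rcases Nat.eq_zero_or_pos k with rfl | hk
          · rfl
          · exfalso
            have h4 : (4:ℕ) ≤ 2 ^ (k + 1) := by
              calc (4:ℕ) = 2 ^ 2 := by norm_num
                _ ≤ 2 ^ (k + 1) := Nat.pow_le_pow_right (by norm_num) (by omega)
            omega
        subst hk0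
        have hc : c = 2 := by omega
        obtain ⟨hd1, hd2, hd3⟩ := hdef hc
        rw [hc] at hBL
        have h32 : u 3 = u 2 + 1 := hBL 0
        have h54 : u 5 = u 4 + 1 := hBL 1
        exact defect_squares hd1 hd2 hd3 h32 h54 _ (by norm_num) b
    · obtain ⟨j', rfl⟩ : ∃ j', j = j' + 1 := ⟨j - 1, by omega⟩
      have hvOlf := olf_sub hu c hBL
      have hvocc := occ_sub hocc hj hBL
      obtain ⟨hbnd, hsq⟩ := IH _ hvOlf g j' hvocc
      by_cases hmax : j' = 2 ^ k - 1
      · -- j = 2^k : the occurrence is aligned at the very beginning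
        rcases (show c = 0 ∨ c = 1 ∨ c = 2 by omega) with rfl | rfl | rfl
        · -- c = 0 : maximal position
          have hieq : i = 2 ^ (k + 1) - 1 := by omega
          refine ⟨by omega, ?_⟩
          intro _ b
          obtain ⟨L, hL1, hL3, hLsq, hLlast⟩ := hsq hmax (b + 1)
          have hv : ∀ m, m < L → u (0 + 2 * m) = u (0 + 2 * (m + L)) := fun m hm => hLsq m hm
          have hvl : u (0 + 2 * (L - 1)) = b + 1 := hLlast
          refine ⟨2 * L, by omega, by omega, ?_, ?_⟩
          · intro s hs
            rcases Nat.even_or_odd s with ⟨m, hm⟩ | ⟨m, hm⟩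
            · have hm' : s = 2 * m := by omega
              subst hm'
              calc u (2 * m) = u (0 + 2 * m) := congrArg u (by omega)
                _ = u (0 + 2 * (m + L)) := hv m (by omega)
                _ = u (2 * m + 2 * L) := congrArg u (by omega)
            · subst hm
              calc u (2 * m + 1) = u (0 + 2 * m + 1) := congrArg u (by omega)
                _ = u (0 + 2 * m) + 1 := hBL m
                _ = u (0 + 2 * (m + L)) + 1 := by rw [hv m (by omega)]
                _ = u (0 + 2 * (m + L) + 1) := (hBL (m + L)).symm
                _ = u (2 * m + 1 + 2 * L) := congrArg u (by omega)
          · calc u (2 * L - 1) = u (0 + 2 * (L - 1) + 1) := congrArg u (by omega)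
              _ = u (0 + 2 * (L - 1)) + 1 := hBL (L - 1)
              _ = (b + 1) + 1 := by rw [hvl]
              _ = b := f2_aa b
        · -- c = 1 : impossible
          exfalso
          obtain ⟨L, hL1, hL3, hLsq, hLlast⟩ := hsq hmax (u 0 + 1)
          have hv : ∀ m, m < L → u (1 + 2 * m) = u (1 + 2 * (m + L)) := fun m hm => hLsq m hm
          have hvl : u (1 + 2 * (L - 1)) = u 0 + 1 := hLlast
          have key := hu 0 (2 * L) (4 * L + 1) (by omega) ?_
          · omega
          · intro t ht
            rcases Nat.eq_zero_or_pos t with rfl | htpos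
            · show u (0 + 0) = u (0 + 0 + 2 * L)
              calc u (0 + 0) = u 0 := congrArg u (by omega)
                _ = (u 0 + 1) + 1 := (f2_aa (u 0)).symm
                _ = u (1 + 2 * (L - 1)) + 1 := by rw [hvl]
                _ = u (1 + 2 * (L - 1) + 1) := (hBL (L - 1)).symm
                _ = u (0 + 0 + 2 * L) := congrArg u (by omega)
            · rcases Nat.even_or_odd (t - 1) with ⟨m, hm⟩ | ⟨m, hm⟩
              · have hm' : t = 2 * m + 1 := by omega
                subst hm'
                calc u (0 + (2 * m + 1)) = u (1 + 2 * m) := congrArg u (by omega)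
                  _ = u (1 + 2 * (m + L)) := hv m (by omega)
                  _ = u (0 + (2 * m + 1) + 2 * L) := congrArg u (by omega)
              · have hm' : t = 2 * m + 2 := by omega
                subst hm'
                calc u (0 + (2 * m + 2)) = u (1 + 2 * m + 1) := congrArg u (by omega)
                  _ = u (1 + 2 * m) + 1 := hBL m
                  _ = u (1 + 2 * (m + L)) + 1 := by rw [hv m (by omega)]
                  _ = u (1 + 2 * (m + L) + 1) := (hBL (m + L)).symm
                  _ = u (0 + (2 * m + 2) + 2 * L) := congrArg u (by omega)
        · -- c = 2 : impossible
          exfalso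
          obtain ⟨hd1, hd2, hd3⟩ := hdef rfl
          obtain ⟨L, hL1, hL3, hLsq, hLlast⟩ := hsq hmax (u 2)
          have hv : ∀ m, m < L → u (2 + 2 * m) = u (2 + 2 * (m + L)) := fun m hm => hLsq m hm
          have hvl : u (2 + 2 * (L - 1)) = u 2 := hLlast
          have key := hu 1 (2 * L) (4 * L + 1) (by omega) ?_
          · omega
          · intro t ht
            rcases Nat.eq_zero_or_pos t with rfl | htpos
            · show u (1 + 0) = u (1 + 0 + 2 * L)
              calc u (1 + 0) = u 1 := congrArg u (by omega)
                _ = u 2 + 1 := hd2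
                _ = u (2 + 2 * (L - 1)) + 1 := by rw [hvl]
                _ = u (2 + 2 * (L - 1) + 1) := (hBL (L - 1)).symm
                _ = u (1 + 0 + 2 * L) := congrArg u (by omega)
            · rcases Nat.even_or_odd (t - 1) with ⟨m, hm⟩ | ⟨m, hm⟩
              · have hm' : t = 2 * m + 1 := by omega
                subst hm'
                calc u (1 + (2 * m + 1)) = u (2 + 2 * m) := congrArg u (by omega)
                  _ = u (2 + 2 * (m + L)) := hv m (by omega)
                  _ = u (1 + (2 * m + 1) + 2 * L) := congrArg u (by omega)
              · have hm' : t = 2 * m + 2 := by omega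
                subst hm'
                calc u (1 + (2 * m + 2)) = u (2 + 2 * m + 1) := congrArg u (by omega)
                  _ = u (2 + 2 * m) + 1 := hBL m
                  _ = u (2 + 2 * (m + L)) + 1 := by rw [hv m (by omega)]
                  _ = u (2 + 2 * (m + L) + 1) := (hBL (m + L)).symm
                  _ = u (1 + (2 * m + 2) + 2 * L) := congrArg u (by omega)
      · -- j < 2^k : position is below the maximum unless c = 2 exactly at the edge
        have hj'lt : j' + 1 ≤ 2 ^ k - 1 := by omega
        refine ⟨by omega, ?_⟩
        intro hieq b
        have hc : c = 2 := by omega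
        obtain ⟨hd1, hd2, hd3⟩ := hdef hc
        rw [hc] at hBL
        have h32 : u 3 = u 2 + 1 := hBL 0
        have h54 : u 5 = u 4 + 1 := hBL 1
        exact defect_squares hd1 hd2 hd3 h32 h54 _ (by omega) b

/-! ### Uniqueness of the occurrence -/

lemma M_small {k t : ℕ} (ht : t < 2 ^ k) : M k t = thueMorse t := by
  unfold M
  rw [Nat.div_eq_of_lt ht, Nat.mod_eq_of_lt ht, Nat.cast_zero, zero_add]

lemma M_shift {k t : ℕ} (ht : t < 2 ^ k) : M k (2 ^ k + t) = 1 + thueMorse t := by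
  unfold M
  rw [add_comm (2 ^ k) t, Nat.add_div_right _ ((by positivity)),
    Nat.div_eq_of_lt ht, Nat.add_mod_right, Nat.mod_eq_of_lt ht]
  simp

lemma occ_nocross {u : ℕ → Fin 2} (hu : Olf u) {k i j : ℕ} {g g' : Fin 2}
    (hi : OccF u i k g) (hj : OccF u j k g') (hlt : i < j) : False := by
  have h2k : (1:ℕ) ≤ 2 ^ k := Nat.one_le_two_pow
  have hib := (occF_main k u hu g i hi).1
  have hjb := (occF_main k u hu g' j hj).1
  set d := j - i with hd
  have hd1 : 1 ≤ d := by omega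
  have hdk : d ≤ 2 ^ k - 1 := by omega
  rcases f2_cases g' g with heq | hgg
  · -- same flag: period d, length 3·2^k+2
    subst heq
    have key := hu i d (3 * 2 ^ k + 2) (by omega) ?_
    · omega
    · intro t ht
      calc u (i + t) = P k t + g' := hi t (by omega)
        _ = u (j + t) := (hj t (by omega)).symm
        _ = u (i + t + d) := congrArg u (by omega)
  · -- opposite flags: period 2^k - d at base j+1, length 2^k + (2^k - d)
    have key := hu (j + 1) (2 ^ k - d) (2 ^ k + (2 ^ k - d)) (by omega) ?_
    · omega
    · intro t ht
      have htk : t < 2 ^ k := by omega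
      have hL : u (j + 1 + t) = thueMorse t + g + 1 := by
        have h := occ_mid hj t (by omega)
        rw [M_small htk, hgg] at h
        rw [h]
        abel
      have hR : u (i + 1 + (2 ^ k + t)) = 1 + thueMorse t + g := by
        have h := occ_mid hi (2 ^ k + t) (by omega)
        rwa [M_shift htk] at h
      calc u (j + 1 + t) = thueMorse t + g + 1 := hL
        _ = 1 + thueMorse t + g := by abel
        _ = u (i + 1 + (2 ^ k + t)) := hR.symm
        _ = u (j + 1 + t + (2 ^ k - d)) := congrArg u (by omega)

/-- In an overlap-free infinite binary word, any occurrence of `r_k` or of its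
complement is at a position `≤ 2^k - 1`; in total they occur at most once. -/
theorem rK_occurrence (u : ℕ → Fin 2) (hu : OverlapFree u) (k : ℕ) :
    (∀ i, (factorAt u i (rK k).length = rK k ∨ factorAt u i (rK k).length = compl (rK k)) →
      i ≤ 2 ^ k - 1) ∧
    (∀ i j,
      (factorAt u i (rK k).length = rK k ∨ factorAt u i (rK k).length = compl (rK k)) →
      (factorAt u j (rK k).length = rK k ∨ factorAt u j (rK k).length = compl (rK k)) →
      i = j) := by
  have hu' : Olf u := olf_of_overlapFree hu
  have hocc : ∀ i, (factorAt u i (rK k).length = rK k ∨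
      factorAt u i (rK k).length = compl (rK k)) → ∃ g, OccF u i k g := by
    intro i hi
    rcases hi with h | h
    · exact ⟨0, (occ_iff_r u i k).mp h⟩
    · exact ⟨1, (occ_iff_c u i k).mp h⟩
  constructor
  · intro i hi
    obtain ⟨g, hg⟩ := hocc i hi
    exact (occF_main k u hu' g i hg).1
  · intro i j hi hj
    obtain ⟨g, hg⟩ := hocc i hi
    obtain ⟨g', hg'⟩ := hocc j hj
    rcases lt_trichotomy i j with h | h | h
    · exact (occ_nocross hu' hg hg' h).elim
    · exact h
    · exact (occ_nocross hu' hg' hg h).elim
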